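/- Let X = {x1,...,x5}. Define three 3-state characters on X: χ1 = x1x2|x3x4|x5, χ2 = x1x5|x2x4|x3, χ3 = x1|x2x3|x4x5. Then every pair of these characters is compatible (admits a perfect phylogeny), but the set {χ1, χ2, χ3} is incompatible. -/

import Mathlib

namespace PP

/-- A vertex is a leaf (degree at most one) if it has at most one neighbour. -/
def IsLeafVert {V : Type} (G : SimpleGraph V) (w : V) : Prop :=
  ∀ w₁ w₂ : V, G.Adj w w₁ → G.Adj w w₂ → w₁ = w₂

/-- A (finite, unrooted) phylogenetic tree on a label set `X ⊆ L`:
its leaves are bijectively labelled by the elements of `X`. -/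
structure PhyloTree {L : Type} (X : Set L) where
  V : Type
  finV : Finite V
  G : SimpleGraph V
  isTree : G.IsTree
  leaf : L → V
  leaf_injOn : Set.InjOn leaf X
  leaf_isLeaf : ∀ x ∈ X, IsLeafVert G (leaf x)
  leaf_surj : ∀ w, IsLeafVert G w → ∃ x ∈ X, leaf x = w

/-- The vertex set of the minimal subtree `T[S]` spanning the leaves labelled by `S ∩ X`. -/
def subtree {L : Type} {X : Set L} (T : PhyloTree X) (S : Set L) : Set T.V :=
  {w | ∃ x ∈ S ∩ X, ∃ y ∈ S ∩ X,
        ∃ p : T.G.Walk (T.leaf x) (T.leaf y), p.IsPath ∧ w ∈ p.support}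

/-- `T` displays the character `χ` (a state assignment, whose nonempty fibres on `X`
are the states) if the minimal subtrees spanning distinct states are vertex-disjoint. -/
def displays {L : Type} {X : Set L} (T : PhyloTree X) (χ : L → ℕ) : Prop :=
  ∀ s t : ℕ, s ≠ t → Disjoint (subtree T {x | χ x = s}) (subtree T {x | χ x = t})

/-- A set of characters is compatible if some tree on `X` displays all of them. -/
def compatible {L : Type} (X : Set L) (C : Set (L → ℕ)) : Prop :=
  ∃ T : PhyloTree X, ∀ χ ∈ C, displays T χ

/-- X = {x₁,…,x₅}, labelled by 1,…,5. -/
def X5 : Set ℕ := {x | 1 ≤ x ∧ x ≤ 5}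

/-- χ₁ = x₁x₂ | x₃x₄ | x₅ -/
def chi1 : ℕ → ℕ := fun x => if x ≤ 2 then 0 else if x ≤ 4 then 1 else 2

/-- χ₂ = x₁x₅ | x₂x₄ | x₃ -/
def chi2 : ℕ → ℕ := fun x => if x = 3 then 2 else if x = 2 ∨ x = 4 then 1 else 0

/-- χ₃ = x₁ | x₂x₃ | x₄x₅ -/
def chi3 : ℕ → ℕ := fun x => if x = 1 then 0 else if x ≤ 3 then 1 else 2


section Aux
open SimpleGraph Walk
variable {V : Type} {G : SimpleGraph V}


lemma path_length (hT : G.IsTree) {u v : V} (p : G.Walk u v) (hp : p.IsPath) :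
    p.length = G.dist u v := by
  obtain ⟨q, hq, hql⟩ := hT.isConnected.exists_path_of_dist u v
  have h : (⟨p, hp⟩ : G.Path u v) = ⟨q, hq⟩ := hT.IsAcyclic.path_unique _ _
  rw [← hql]
  exact congrArg (fun r : G.Path u v => (r : G.Walk u v).length) h

lemma btw_of_mem (hT : G.IsTree) {u v w : V} (p : G.Walk u v) (hp : p.IsPath)
    (hw : w ∈ p.support) : G.dist u w + G.dist w v = G.dist u v := by
  classical
  have h1 := path_length hT _ (hp.takeUntil hw)
  have h2 := path_length hT _ (hp.dropUntil hw)
  have h3 := path_length hT p hp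
  have h4 := congrArg Walk.length (p.take_spec hw)
  rw [Walk.length_append] at h4
  omega

lemma append_isPath {u v w : V} {p : G.Walk u w} {q : G.Walk w v}
    (hp : p.IsPath) (hq : q.IsPath)
    (hcap : ∀ x, x ∈ p.support → x ∈ q.support → x = w) : (p.append q).IsPath := by
  rw [Walk.isPath_def, Walk.support_append]
  have hqc : q.support = w :: q.support.tail := q.support_eq_cons
  have hqn : q.support.Nodup := hq.support_nodup
  rw [hqc] at hqn
  rcases List.nodup_cons.mp hqn with ⟨hwq, htl⟩
  refine List.Nodup.append hp.support_nodup htl ?_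
  intro x hxp hxq
  have hxq' : x ∈ q.support := by rw [hqc]; exact List.mem_cons_of_mem _ hxq
  have := hcap x hxp hxq'
  subst this
  exact hwq hxq

lemma mem_path_of_btw (hT : G.IsTree) {u v w : V}
    (h : G.dist u w + G.dist w v = G.dist u v) :
    ∃ p : G.Walk u v, p.IsPath ∧ w ∈ p.support := by
  obtain ⟨r, hr, hrl⟩ := hT.isConnected.exists_path_of_dist u w
  obtain ⟨s, hs, hsl⟩ := hT.isConnected.exists_path_of_dist w v
  refine ⟨r.append s, append_isPath hr hs ?_, ?_⟩
  · intro x hxr hxs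
    have h1 := btw_of_mem hT r hr hxr
    have h2 := btw_of_mem hT s hs hxs
    have h3 := hT.isConnected.dist_triangle (u := u) (v := x) (w := v)
    have h4 : G.dist x w = G.dist w x := SimpleGraph.dist_comm
    have h5 : G.dist x w = 0 := by omega
    exact (hT.isConnected.dist_eq_zero_iff).mp h5
  · rw [Walk.mem_support_append_iff]; left; exact r.end_mem_support

lemma median (hT : G.IsTree) (a b c : V) :
    ∃ m, G.dist a m + G.dist m b = G.dist a b ∧ G.dist b m + G.dist m c = G.dist b c ∧
      G.dist a m + G.dist m c = G.dist a c := by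
  classical
  obtain ⟨q, hq, _⟩ := hT.isConnected.exists_path_of_dist b c
  obtain ⟨m, hm0, hmin0⟩ := q.support.toFinset.exists_min_image (G.dist a)
    ⟨b, List.mem_toFinset.mpr q.start_mem_support⟩
  have hm : m ∈ q.support := List.mem_toFinset.mp hm0
  have hmin : ∀ x ∈ q.support, G.dist a m ≤ G.dist a x :=
    fun x hx => hmin0 x (List.mem_toFinset.mpr hx)
  obtain ⟨r, hr, _⟩ := hT.isConnected.exists_path_of_dist a m
  have hcom : ∀ x, x ∈ r.support → x ∈ q.support → x = m := by
    intro x hxr hxq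
    have h1 := btw_of_mem hT r hr hxr
    have h2 := hmin x hxq
    have h5 : G.dist x m = 0 := by omega
    exact (hT.isConnected.dist_eq_zero_iff).mp h5
  have hamb : G.dist a m + G.dist m b = G.dist a b := by
    have htp : ((q.takeUntil m hm).reverse : G.Walk m b).IsPath := (hq.takeUntil hm).reverse
    have hap : (r.append (q.takeUntil m hm).reverse).IsPath := by
      refine append_isPath hr htp ?_
      intro x hxr hxt
      refine hcom x hxr ?_
      rw [Walk.support_reverse, List.mem_reverse] at hxt
      exact q.support_takeUntil_subset hm hxt
    exact btw_of_mem hT _ hap (by rw [Walk.mem_support_append_iff]; left; exact r.end_mem_support)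
  have hamc : G.dist a m + G.dist m c = G.dist a c := by
    have hdp : (q.dropUntil m hm).IsPath := hq.dropUntil hm
    have hap : (r.append (q.dropUntil m hm)).IsPath := by
      refine append_isPath hr hdp ?_
      intro x hxr hxt
      exact hcom x hxr (q.support_dropUntil_subset hm hxt)
    exact btw_of_mem hT _ hap (by rw [Walk.mem_support_append_iff]; left; exact r.end_mem_support)
  exact ⟨m, hamb, btw_of_mem hT q hq hm, hamc⟩

lemma collinear (hT : G.IsTree) {a b m m' : V} {p : G.Walk a b} (hp : p.IsPath)
    (hm : m ∈ p.support) (hm' : m' ∈ p.support) :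
    G.dist a m + G.dist m m' = G.dist a m' ∨ G.dist a m' + G.dist m' m = G.dist a m := by
  classical
  have hsplit : m ∈ (p.takeUntil m' hm').support ∨ m ∈ (p.dropUntil m' hm').support := by
    rw [← Walk.mem_support_append_iff, p.take_spec hm']; exact hm
  rcases hsplit with h | h
  · exact Or.inl (btw_of_mem hT _ (hp.takeUntil hm') h)
  · right
    have h1 := btw_of_mem hT _ (hp.dropUntil hm') h
    have h2 := btw_of_mem hT p hp hm
    have h3 := btw_of_mem hT p hp hm'
    omega
lemma same_path (hT : G.IsTree) {a b : V} {p q : G.Walk a b} (hp : p.IsPath) (hq : q.IsPath) :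
    p = q := by
  have h : (⟨p, hp⟩ : G.Path a b) = ⟨q, hq⟩ := hT.IsAcyclic.path_unique _ _
  exact congrArg Subtype.val h

lemma fourpoint (hT : G.IsTree) (a b c d : V) :
    G.dist a b + G.dist c d ≤ max (G.dist a c + G.dist b d) (G.dist a d + G.dist b c) := by
  obtain ⟨m, hab, hbc, hac⟩ := median hT a b c
  obtain ⟨m', hab', hbd', had'⟩ := median hT a b d
  obtain ⟨p, hp, hmp⟩ := mem_path_of_btw hT hab
  obtain ⟨p', hp', hmp'⟩ := mem_path_of_btw hT hab'
  rw [same_path hT hp' hp] at hmp'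
  have c1 : G.dist c m = G.dist m c := SimpleGraph.dist_comm
  have c2 : G.dist b m = G.dist m b := SimpleGraph.dist_comm
  have c3 : G.dist b m' = G.dist m' b := SimpleGraph.dist_comm
  have c4 : G.dist m m' = G.dist m' m := SimpleGraph.dist_comm
  have t1 := hT.isConnected.dist_triangle (u := c) (v := m) (w := d)
  have t2 := hT.isConnected.dist_triangle (u := m) (v := m') (w := d)
  have t3 := hT.isConnected.dist_triangle (u := c) (v := m) (w := m')
  rcases collinear hT hp hmp hmp' with h | h
  · refine le_trans ?_ (le_max_right _ _)
    omega
  · refine le_trans ?_ (le_max_left _ _)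
    omega

lemma cross_of_disjoint (hT : G.IsTree) {a b c d : V}
    (H : ∀ w, G.dist a w + G.dist w b = G.dist a b →
      G.dist c w + G.dist w d = G.dist c d → False) :
    G.dist a c + G.dist b d = G.dist a d + G.dist b c ∧
      G.dist a b + G.dist c d < G.dist a c + G.dist b d := by
  obtain ⟨m, hab, hbc, hac⟩ := median hT a b c
  obtain ⟨m', hab', hbd', had'⟩ := median hT a b d
  obtain ⟨p, hp, hmp⟩ := mem_path_of_btw hT hab
  obtain ⟨p', hp', hmp'⟩ := mem_path_of_btw hT hab'
  rw [same_path hT hp' hp] at hmp'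
  have hms : G.dist c d < G.dist c m + G.dist m d := by
    rcases lt_or_eq_of_le (hT.isConnected.dist_triangle (u := c) (v := m) (w := d)) with h | h
    · exact h
    · exact absurd h.symm (fun he => H m hab he)
  have hms' : G.dist c d < G.dist c m' + G.dist m' d := by
    rcases lt_or_eq_of_le (hT.isConnected.dist_triangle (u := c) (v := m') (w := d)) with h | h
    · exact h
    · exact absurd h.symm (fun he => H m' hab' he)
  have c1 : G.dist c m = G.dist m c := SimpleGraph.dist_comm
  have c2 : G.dist b m = G.dist m b := SimpleGraph.dist_comm
  have c3 : G.dist b m' = G.dist m' b := SimpleGraph.dist_comm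
  have c4 : G.dist m m' = G.dist m' m := SimpleGraph.dist_comm
  have c5 : G.dist c b = G.dist b c := SimpleGraph.dist_comm
  have c6 : G.dist d c = G.dist c d := SimpleGraph.dist_comm
  have c7 : G.dist d b = G.dist b d := SimpleGraph.dist_comm
  have t2 := hT.isConnected.dist_triangle (u := m) (v := m') (w := d)
  have t3 := hT.isConnected.dist_triangle (u := c) (v := m) (w := m')
  have key : G.dist a b + G.dist c d < G.dist a d + G.dist b c ∨
      G.dist a b + G.dist c d < G.dist a c + G.dist b d := by
    rcases collinear hT hp hmp hmp' with h | h
    · left; omega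
    · right; omega
  have F1 := fourpoint hT a d b c
  have F2 := fourpoint hT a c b d
  rcases le_max_iff.mp F1 with F1' | F1' <;> rcases le_max_iff.mp F2 with F2' | F2' <;>
    rcases key with k | k <;> constructor <;> omega
lemma incompat : ¬ compatible X5 {chi1, chi2, chi3} := by
  rintro ⟨T, hdisp⟩
  have hT := T.isTree
  set G := T.G with hG
  set l : ℕ → T.V := T.leaf with hl
  have mk : ∀ (χ : ℕ → ℕ), displays T χ → ∀ (a b c d : ℕ), a ∈ X5 → b ∈ X5 → c ∈ X5 →
      d ∈ X5 → χ a = χ b → χ c = χ d → χ a ≠ χ c →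
      ∀ w, G.dist (l a) w + G.dist w (l b) = G.dist (l a) (l b) →
        G.dist (l c) w + G.dist w (l d) = G.dist (l c) (l d) → False := by
    intro χ hχ a b c d ha hb hc hd hab hcd hne w h1 h2
    obtain ⟨p, hp, hwp⟩ := mem_path_of_btw hT h1
    obtain ⟨q, hq, hwq⟩ := mem_path_of_btw hT h2
    have w1 : w ∈ subtree T {x | χ x = χ a} := ⟨a, ⟨rfl, ha⟩, b, ⟨hab.symm, hb⟩, p, hp, hwp⟩
    have w2 : w ∈ subtree T {x | χ x = χ c} := ⟨c, ⟨rfl, hc⟩, d, ⟨hcd.symm, hd⟩, q, hq, hwq⟩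
    exact Set.disjoint_left.mp (hχ (χ a) (χ c) hne) w1 w2
  have hX : ∀ n : ℕ, 1 ≤ n → n ≤ 5 → n ∈ X5 := fun n h1 h2 => ⟨h1, h2⟩
  have hd1 : displays T chi1 := hdisp chi1 (by simp)
  have hd2 : displays T chi2 := hdisp chi2 (by simp)
  have hd3 : displays T chi3 := hdisp chi3 (by simp)
  have KA := cross_of_disjoint hT (mk chi1 hd1 1 2 3 4 (hX 1 (by norm_num) (by norm_num))
    (hX 2 (by norm_num) (by norm_num)) (hX 3 (by norm_num) (by norm_num))
    (hX 4 (by norm_num) (by norm_num)) (by decide) (by decide) (by decide))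
  have KB := cross_of_disjoint hT (mk chi2 hd2 1 5 2 4 (hX 1 (by norm_num) (by norm_num))
    (hX 5 (by norm_num) (by norm_num)) (hX 2 (by norm_num) (by norm_num))
    (hX 4 (by norm_num) (by norm_num)) (by decide) (by decide) (by decide))
  have KC := cross_of_disjoint hT (mk chi3 hd3 2 3 4 5 (hX 2 (by norm_num) (by norm_num))
    (hX 3 (by norm_num) (by norm_num)) (hX 4 (by norm_num) (by norm_num))
    (hX 5 (by norm_num) (by norm_num)) (by decide) (by decide) (by decide))
  obtain ⟨eqA, ltA⟩ := KA
  obtain ⟨eqB, ltB⟩ := KB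
  obtain ⟨eqC, ltC⟩ := KC
  have F1 := fourpoint hT (l 1) (l 2) (l 3) (l 5)
  have F2 := fourpoint hT (l 1) (l 3) (l 2) (l 5)
  have cm : ∀ i j : ℕ, G.dist (l i) (l j) = G.dist (l j) (l i) :=
    fun i j => SimpleGraph.dist_comm
  have c54 := cm 5 4; have c52 := cm 5 2; have c32 := cm 3 2; have c25 := cm 2 5
  have c35 := cm 3 5; have c24 := cm 2 4; have c45 := cm 4 5; have c34 := cm 3 4
  have c23 := cm 2 3; have c14 := cm 1 4; have c13 := cm 1 3; have c15 := cm 1 5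
  rcases le_max_iff.mp F1 with F1' | F1' <;> rcases le_max_iff.mp F2 with F2' | F2' <;> omega
def EL : List (Fin 8 × Fin 8) := [(0,5),(1,5),(2,6),(3,7),(4,7),(5,6),(6,7)]

def Gr : SimpleGraph (Fin 8) := SimpleGraph.fromRel (fun a b => (a,b) ∈ EL)

instance GrAdjDec : DecidableRel Gr.Adj := fun a b =>
  inferInstanceAs (Decidable (a ≠ b ∧ ((a,b) ∈ EL ∨ (b,a) ∈ EL)))

instance GrPathDec {a b : Fin 8} (p : Gr.Walk a b) : Decidable p.IsPath :=
  decidable_of_iff _ (SimpleGraph.Walk.isPath_def p).symm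

lemma walk_color {W : Type} {H : SimpleGraph W} (f : W → Bool)
    (hf : ∀ x y, H.Adj x y → f x = f y) {u v : W} : H.Reachable u v → f u = f v := by
  rintro ⟨p⟩
  induction p with
  | nil => rfl
  | cons h p ih => exact (hf _ _ h).trans ih

lemma grConn : Gr.Connected := by
  rw [SimpleGraph.connected_iff]
  refine ⟨?_, ⟨0⟩⟩
  have to6 : ∀ v : Fin 8, Gr.Reachable v 6 := by
    intro v
    fin_cases v
    · exact (Walk.cons (show Gr.Adj 0 5 by decide) (Walk.cons (show Gr.Adj 5 6 by decide) Walk.nil)).reachable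
    · exact (Walk.cons (show Gr.Adj 1 5 by decide) (Walk.cons (show Gr.Adj 5 6 by decide) Walk.nil)).reachable
    · exact (Walk.cons (show Gr.Adj 2 6 by decide) Walk.nil).reachable
    · exact (Walk.cons (show Gr.Adj 3 7 by decide) (Walk.cons (show Gr.Adj 7 6 by decide) Walk.nil)).reachable
    · exact (Walk.cons (show Gr.Adj 4 7 by decide) (Walk.cons (show Gr.Adj 7 6 by decide) Walk.nil)).reachable
    · exact (Walk.cons (show Gr.Adj 5 6 by decide) Walk.nil).reachable
    · exact Walk.nil.reachable
    · exact (Walk.cons (show Gr.Adj 7 6 by decide) Walk.nil).reachable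
  exact fun u v => (to6 u).trans (to6 v).symm

lemma grBridge : ∀ u v : Fin 8, Gr.Adj u v → Gr.IsBridge s(u,v) := by
  have gen : ∀ (u v : Fin 8) (f : Fin 8 → Bool), Gr.Adj u v →
      (∀ x y, Gr.Adj x y → ¬(x = u ∧ y = v) → ¬(x = v ∧ y = u) → f x = f y) →
      f u ≠ f v → Gr.IsBridge s(u,v) := by
    intro u v f huv hf hne
    rw [SimpleGraph.isBridge_iff]
    refine fun hreach => hne ?_
    refine walk_color f ?_ hreach
    intro x y hxy
    rw [SimpleGraph.deleteEdges_adj] at hxy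
    obtain ⟨hadj, hno⟩ := hxy
    refine hf x y hadj ?_ ?_
    · rintro ⟨rfl, rfl⟩
      exact hno (Set.mem_singleton _)
    · rintro ⟨rfl, rfl⟩
      exact hno (Set.mem_singleton_iff.mpr Sym2.eq_swap)
  intro u v huv
  fin_cases u <;> fin_cases v <;>
    first
    | exact absurd huv (by decide)
    | exact gen _ _ (fun x => decide (x = 0)) huv (by decide) (by decide)
    | exact gen _ _ (fun x => decide (x = 1)) huv (by decide) (by decide)
    | exact gen _ _ (fun x => decide (x = 2)) huv (by decide) (by decide)
    | exact gen _ _ (fun x => decide (x = 3)) huv (by decide) (by decide)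
    | exact gen _ _ (fun x => decide (x = 4)) huv (by decide) (by decide)
    | exact gen _ _ (fun x => decide (x = 0 ∨ x = 1 ∨ x = 5)) huv (by decide) (by decide)
    | exact gen _ _ (fun x => decide (x = 3 ∨ x = 4 ∨ x = 7)) huv (by decide) (by decide)

lemma grIsTree : Gr.IsTree :=
  ⟨grConn, SimpleGraph.isAcyclic_iff_forall_adj_isBridge.mpr grBridge⟩
lemma uniq_support {a b : Fin 8} (p0 : Gr.Walk a b) (h0 : p0.IsPath)
    (p : Gr.Walk a b) (hp : p.IsPath) : p.support = p0.support := by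
  rw [same_path grIsTree hp h0]

lemma pbound {a b : Fin 8} {K : List (Fin 8)} (p0 : Gr.Walk a b) (h0 : p0.IsPath)
    (hK : ∀ z : Fin 8, z ∈ p0.support → z ∈ K) {p : Gr.Walk a b} (hp : p.IsPath)
    {w : Fin 8} (hw : w ∈ p.support) : w ∈ K :=
  hK w (uniq_support p0 h0 p hp ▸ hw)

def W01 : Gr.Walk 0 1 :=
  .cons (show Gr.Adj 0 5 by decide) (.cons (show Gr.Adj 5 1 by decide) .nil)
def W02 : Gr.Walk 0 2 :=
  .cons (show Gr.Adj 0 5 by decide) (.cons (show Gr.Adj 5 6 by decide)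
    (.cons (show Gr.Adj 6 2 by decide) .nil))
def W12 : Gr.Walk 1 2 :=
  .cons (show Gr.Adj 1 5 by decide) (.cons (show Gr.Adj 5 6 by decide)
    (.cons (show Gr.Adj 6 2 by decide) .nil))
def W23 : Gr.Walk 2 3 :=
  .cons (show Gr.Adj 2 6 by decide) (.cons (show Gr.Adj 6 7 by decide)
    (.cons (show Gr.Adj 7 3 by decide) .nil))
def W24 : Gr.Walk 2 4 :=
  .cons (show Gr.Adj 2 6 by decide) (.cons (show Gr.Adj 6 7 by decide)
    (.cons (show Gr.Adj 7 4 by decide) .nil))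
def W34 : Gr.Walk 3 4 :=
  .cons (show Gr.Adj 3 7 by decide) (.cons (show Gr.Adj 7 4 by decide) .nil)

def f12 : ℕ → Fin 8 := fun n =>
  if n = 1 then 0 else if n = 2 then 2 else if n = 3 then 3 else if n = 4 then 4 else 1
def f13 : ℕ → Fin 8 := fun n =>
  if n = 1 then 0 else if n = 2 then 1 else if n = 3 then 2 else if n = 4 then 3 else 4
def f23 : ℕ → Fin 8 := fun n =>
  if n = 1 then 0 else if n = 2 then 3 else if n = 3 then 4 else if n = 4 then 2 else 1

lemma mkinj (f : ℕ → Fin 8)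
    (h : f 1 ≠ f 2 ∧ f 1 ≠ f 3 ∧ f 1 ≠ f 4 ∧ f 1 ≠ f 5 ∧ f 2 ≠ f 3 ∧ f 2 ≠ f 4 ∧
      f 2 ≠ f 5 ∧ f 3 ≠ f 4 ∧ f 3 ≠ f 5 ∧ f 4 ≠ f 5) : Set.InjOn f X5 := by
  rintro a ⟨ha1, ha5⟩ b ⟨hb1, hb5⟩ hab
  obtain ⟨h1,h2,h3,h4,h5,h6,h7,h8,h9,h10⟩ := h
  interval_cases a <;> interval_cases b <;>
    first
      | rfl
      | exact absurd hab (by assumption)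
      | exact absurd hab.symm (by assumption)

instance IsLeafVertDec (w : Fin 8) : Decidable (IsLeafVert Gr w) :=
  inferInstanceAs (Decidable (∀ w₁ w₂ : Fin 8, Gr.Adj w w₁ → Gr.Adj w w₂ → w₁ = w₂))

lemma mkleaf (f : ℕ → Fin 8)
    (h : ∀ n, 1 ≤ n → n ≤ 5 → f n = 0 ∨ f n = 1 ∨ f n = 2 ∨ f n = 3 ∨ f n = 4) :
    ∀ x ∈ X5, IsLeafVert Gr (f x) := by
  rintro x ⟨hx1, hx5⟩
  rcases h x hx1 hx5 with h' | h' | h' | h' | h' <;> rw [h'] <;> decide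

def mkT (f : ℕ → Fin 8) (hinj : Set.InjOn f X5) (hleaf : ∀ x ∈ X5, IsLeafVert Gr (f x))
    (hsurj : ∀ w, IsLeafVert Gr w → ∃ x ∈ X5, f x = w) : PhyloTree X5 :=
  ⟨Fin 8, inferInstance, Gr, grIsTree, f, hinj, hleaf, hsurj⟩

lemma leafvert_cases (w : Fin 8) (hw : IsLeafVert Gr w) :
    w = 0 ∨ w = 1 ∨ w = 2 ∨ w = 3 ∨ w = 4 := by
  fin_cases w
  · exact Or.inl rfl
  · exact Or.inr (Or.inl rfl)
  · exact Or.inr (Or.inr (Or.inl rfl))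
  · exact Or.inr (Or.inr (Or.inr (Or.inl rfl)))
  · exact Or.inr (Or.inr (Or.inr (Or.inr rfl)))
  · exact absurd (hw 0 6 (by decide) (by decide)) (by decide)
  · exact absurd (hw 2 5 (by decide) (by decide)) (by decide)
  · exact absurd (hw 3 6 (by decide) (by decide)) (by decide)

def T12 : PhyloTree X5 :=
  mkT f12 (mkinj f12 (by decide)) (mkleaf f12 (by decide)) (by
    intro w hw
    rcases leafvert_cases w hw with rfl | rfl | rfl | rfl | rfl
    · exact ⟨1, ⟨by norm_num, by norm_num⟩, rfl⟩
    · exact ⟨5, ⟨by norm_num, by norm_num⟩, rfl⟩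
    · exact ⟨2, ⟨by norm_num, by norm_num⟩, rfl⟩
    · exact ⟨3, ⟨by norm_num, by norm_num⟩, rfl⟩
    · exact ⟨4, ⟨by norm_num, by norm_num⟩, rfl⟩)

def T13 : PhyloTree X5 :=
  mkT f13 (mkinj f13 (by decide)) (mkleaf f13 (by decide)) (by
    intro w hw
    rcases leafvert_cases w hw with rfl | rfl | rfl | rfl | rfl
    · exact ⟨1, ⟨by norm_num, by norm_num⟩, rfl⟩
    · exact ⟨2, ⟨by norm_num, by norm_num⟩, rfl⟩
    · exact ⟨3, ⟨by norm_num, by norm_num⟩, rfl⟩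
    · exact ⟨4, ⟨by norm_num, by norm_num⟩, rfl⟩
    · exact ⟨5, ⟨by norm_num, by norm_num⟩, rfl⟩)

def T23 : PhyloTree X5 :=
  mkT f23 (mkinj f23 (by decide)) (mkleaf f23 (by decide)) (by
    intro w hw
    rcases leafvert_cases w hw with rfl | rfl | rfl | rfl | rfl
    · exact ⟨1, ⟨by norm_num, by norm_num⟩, rfl⟩
    · exact ⟨5, ⟨by norm_num, by norm_num⟩, rfl⟩
    · exact ⟨4, ⟨by norm_num, by norm_num⟩, rfl⟩
    · exact ⟨2, ⟨by norm_num, by norm_num⟩, rfl⟩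
    · exact ⟨3, ⟨by norm_num, by norm_num⟩, rfl⟩)
def K12c1 : ℕ → List (Fin 8) := fun s =>
  if s = 0 then [0,5,6,2] else if s = 1 then [3,7,4] else if s = 2 then [1] else []

lemma bound12c1 : ∀ (s : ℕ) (w : Fin 8), w ∈ subtree T12 {x | chi1 x = s} → w ∈ K12c1 s := by
  rintro s w ⟨x, ⟨hxs, hx1, hx5⟩, y, ⟨hys, hy1, hy5⟩, p, hp, hwp⟩
  interval_cases x <;> interval_cases y <;>
    first
    | exact absurd (hxs.trans hys.symm) (by decide)
    | (subst hxs
       first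
       | exact pbound (p := p) Walk.nil Walk.IsPath.nil (by decide) hp hwp
       | exact pbound W01 (by decide) (by decide) hp hwp
       | exact pbound W01.reverse (by decide) (by decide) hp hwp
       | exact pbound W02 (by decide) (by decide) hp hwp
       | exact pbound W02.reverse (by decide) (by decide) hp hwp
       | exact pbound W12 (by decide) (by decide) hp hwp
       | exact pbound W12.reverse (by decide) (by decide) hp hwp
       | exact pbound W23 (by decide) (by decide) hp hwp
       | exact pbound W23.reverse (by decide) (by decide) hp hwp
       | exact pbound W24 (by decide) (by decide) hp hwp
       | exact pbound W24.reverse (by decide) (by decide) hp hwp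
       | exact pbound W34 (by decide) (by decide) hp hwp
       | exact pbound W34.reverse (by decide) (by decide) hp hwp)

lemma disp12c1 : displays T12 chi1 := by
  have hdisj : ∀ s t : ℕ, s ≠ t → ∀ z : Fin 8, z ∈ K12c1 s → z ∈ K12c1 t → False := by
    intro s t hst z h1 h2
    unfold K12c1 at h1 h2
    split_ifs at h1 h2 <;> first | omega | (revert z; decide)
  intro s t hst
  rw [Set.disjoint_left]
  intro w h1 h2
  exact hdisj s t hst w (bound12c1 s w h1) (bound12c1 t w h2)
def K12c2 : ℕ → List (Fin 8) := fun s =>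
  if s = 0 then [0,5,1] else if s = 1 then [2,6,7,4] else if s = 2 then [3] else []

lemma bound12c2 : ∀ (s : ℕ) (w : Fin 8), w ∈ subtree T12 {x | chi2 x = s} → w ∈ K12c2 s := by
  rintro s w ⟨x, ⟨hxs, hx1, hx5⟩, y, ⟨hys, hy1, hy5⟩, p, hp, hwp⟩
  interval_cases x <;> interval_cases y <;>
    first
    | exact absurd (hxs.trans hys.symm) (by decide)
    | (subst hxs
       first
       | exact pbound (p := p) Walk.nil Walk.IsPath.nil (by decide) hp hwp
       | exact pbound W01 (by decide) (by decide) hp hwp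
       | exact pbound W01.reverse (by decide) (by decide) hp hwp
       | exact pbound W02 (by decide) (by decide) hp hwp
       | exact pbound W02.reverse (by decide) (by decide) hp hwp
       | exact pbound W12 (by decide) (by decide) hp hwp
       | exact pbound W12.reverse (by decide) (by decide) hp hwp
       | exact pbound W23 (by decide) (by decide) hp hwp
       | exact pbound W23.reverse (by decide) (by decide) hp hwp
       | exact pbound W24 (by decide) (by decide) hp hwp
       | exact pbound W24.reverse (by decide) (by decide) hp hwp
       | exact pbound W34 (by decide) (by decide) hp hwp
       | exact pbound W34.reverse (by decide) (by decide) hp hwp)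

lemma disp12c2 : displays T12 chi2 := by
  have hdisj : ∀ s t : ℕ, s ≠ t → ∀ z : Fin 8, z ∈ K12c2 s → z ∈ K12c2 t → False := by
    intro s t hst z h1 h2
    unfold K12c2 at h1 h2
    split_ifs at h1 h2 <;> first | omega | (revert z; decide)
  intro s t hst
  rw [Set.disjoint_left]
  intro w h1 h2
  exact hdisj s t hst w (bound12c2 s w h1) (bound12c2 t w h2)
def K13c1 : ℕ → List (Fin 8) := fun s =>
  if s = 0 then [0,5,1] else if s = 1 then [2,6,7,3] else if s = 2 then [4] else []

lemma bound13c1 : ∀ (s : ℕ) (w : Fin 8), w ∈ subtree T13 {x | chi1 x = s} → w ∈ K13c1 s := by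
  rintro s w ⟨x, ⟨hxs, hx1, hx5⟩, y, ⟨hys, hy1, hy5⟩, p, hp, hwp⟩
  interval_cases x <;> interval_cases y <;>
    first
    | exact absurd (hxs.trans hys.symm) (by decide)
    | (subst hxs
       first
       | exact pbound (p := p) Walk.nil Walk.IsPath.nil (by decide) hp hwp
       | exact pbound W01 (by decide) (by decide) hp hwp
       | exact pbound W01.reverse (by decide) (by decide) hp hwp
       | exact pbound W02 (by decide) (by decide) hp hwp
       | exact pbound W02.reverse (by decide) (by decide) hp hwp
       | exact pbound W12 (by decide) (by decide) hp hwp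
       | exact pbound W12.reverse (by decide) (by decide) hp hwp
       | exact pbound W23 (by decide) (by decide) hp hwp
       | exact pbound W23.reverse (by decide) (by decide) hp hwp
       | exact pbound W24 (by decide) (by decide) hp hwp
       | exact pbound W24.reverse (by decide) (by decide) hp hwp
       | exact pbound W34 (by decide) (by decide) hp hwp
       | exact pbound W34.reverse (by decide) (by decide) hp hwp)

lemma disp13c1 : displays T13 chi1 := by
  have hdisj : ∀ s t : ℕ, s ≠ t → ∀ z : Fin 8, z ∈ K13c1 s → z ∈ K13c1 t → False := by
    intro s t hst z h1 h2
    unfold K13c1 at h1 h2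
    split_ifs at h1 h2 <;> first | omega | (revert z; decide)
  intro s t hst
  rw [Set.disjoint_left]
  intro w h1 h2
  exact hdisj s t hst w (bound13c1 s w h1) (bound13c1 t w h2)
def K13c3 : ℕ → List (Fin 8) := fun s =>
  if s = 0 then [0] else if s = 1 then [1,5,6,2] else if s = 2 then [3,7,4] else []

lemma bound13c3 : ∀ (s : ℕ) (w : Fin 8), w ∈ subtree T13 {x | chi3 x = s} → w ∈ K13c3 s := by
  rintro s w ⟨x, ⟨hxs, hx1, hx5⟩, y, ⟨hys, hy1, hy5⟩, p, hp, hwp⟩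
  interval_cases x <;> interval_cases y <;>
    first
    | exact absurd (hxs.trans hys.symm) (by decide)
    | (subst hxs
       first
       | exact pbound (p := p) Walk.nil Walk.IsPath.nil (by decide) hp hwp
       | exact pbound W01 (by decide) (by decide) hp hwp
       | exact pbound W01.reverse (by decide) (by decide) hp hwp
       | exact pbound W02 (by decide) (by decide) hp hwp
       | exact pbound W02.reverse (by decide) (by decide) hp hwp
       | exact pbound W12 (by decide) (by decide) hp hwp
       | exact pbound W12.reverse (by decide) (by decide) hp hwp
       | exact pbound W23 (by decide) (by decide) hp hwp
       | exact pbound W23.reverse (by decide) (by decide) hp hwp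
       | exact pbound W24 (by decide) (by decide) hp hwp
       | exact pbound W24.reverse (by decide) (by decide) hp hwp
       | exact pbound W34 (by decide) (by decide) hp hwp
       | exact pbound W34.reverse (by decide) (by decide) hp hwp)

lemma disp13c3 : displays T13 chi3 := by
  have hdisj : ∀ s t : ℕ, s ≠ t → ∀ z : Fin 8, z ∈ K13c3 s → z ∈ K13c3 t → False := by
    intro s t hst z h1 h2
    unfold K13c3 at h1 h2
    split_ifs at h1 h2 <;> first | omega | (revert z; decide)
  intro s t hst
  rw [Set.disjoint_left]
  intro w h1 h2
  exact hdisj s t hst w (bound13c3 s w h1) (bound13c3 t w h2)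
def K23c2 : ℕ → List (Fin 8) := fun s =>
  if s = 0 then [0,5,1] else if s = 1 then [2,6,7,3] else if s = 2 then [4] else []

lemma bound23c2 : ∀ (s : ℕ) (w : Fin 8), w ∈ subtree T23 {x | chi2 x = s} → w ∈ K23c2 s := by
  rintro s w ⟨x, ⟨hxs, hx1, hx5⟩, y, ⟨hys, hy1, hy5⟩, p, hp, hwp⟩
  interval_cases x <;> interval_cases y <;>
    first
    | exact absurd (hxs.trans hys.symm) (by decide)
    | (subst hxs
       first
       | exact pbound (p := p) Walk.nil Walk.IsPath.nil (by decide) hp hwp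
       | exact pbound W01 (by decide) (by decide) hp hwp
       | exact pbound W01.reverse (by decide) (by decide) hp hwp
       | exact pbound W02 (by decide) (by decide) hp hwp
       | exact pbound W02.reverse (by decide) (by decide) hp hwp
       | exact pbound W12 (by decide) (by decide) hp hwp
       | exact pbound W12.reverse (by decide) (by decide) hp hwp
       | exact pbound W23 (by decide) (by decide) hp hwp
       | exact pbound W23.reverse (by decide) (by decide) hp hwp
       | exact pbound W24 (by decide) (by decide) hp hwp
       | exact pbound W24.reverse (by decide) (by decide) hp hwp
       | exact pbound W34 (by decide) (by decide) hp hwp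
       | exact pbound W34.reverse (by decide) (by decide) hp hwp)

lemma disp23c2 : displays T23 chi2 := by
  have hdisj : ∀ s t : ℕ, s ≠ t → ∀ z : Fin 8, z ∈ K23c2 s → z ∈ K23c2 t → False := by
    intro s t hst z h1 h2
    unfold K23c2 at h1 h2
    split_ifs at h1 h2 <;> first | omega | (revert z; decide)
  intro s t hst
  rw [Set.disjoint_left]
  intro w h1 h2
  exact hdisj s t hst w (bound23c2 s w h1) (bound23c2 t w h2)
def K23c3 : ℕ → List (Fin 8) := fun s =>
  if s = 0 then [0] else if s = 1 then [3,7,4] else if s = 2 then [1,5,6,2] else []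

lemma bound23c3 : ∀ (s : ℕ) (w : Fin 8), w ∈ subtree T23 {x | chi3 x = s} → w ∈ K23c3 s := by
  rintro s w ⟨x, ⟨hxs, hx1, hx5⟩, y, ⟨hys, hy1, hy5⟩, p, hp, hwp⟩
  interval_cases x <;> interval_cases y <;>
    first
    | exact absurd (hxs.trans hys.symm) (by decide)
    | (subst hxs
       first
       | exact pbound (p := p) Walk.nil Walk.IsPath.nil (by decide) hp hwp
       | exact pbound W01 (by decide) (by decide) hp hwp
       | exact pbound W01.reverse (by decide) (by decide) hp hwp
       | exact pbound W02 (by decide) (by decide) hp hwp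
       | exact pbound W02.reverse (by decide) (by decide) hp hwp
       | exact pbound W12 (by decide) (by decide) hp hwp
       | exact pbound W12.reverse (by decide) (by decide) hp hwp
       | exact pbound W23 (by decide) (by decide) hp hwp
       | exact pbound W23.reverse (by decide) (by decide) hp hwp
       | exact pbound W24 (by decide) (by decide) hp hwp
       | exact pbound W24.reverse (by decide) (by decide) hp hwp
       | exact pbound W34 (by decide) (by decide) hp hwp
       | exact pbound W34.reverse (by decide) (by decide) hp hwp)

lemma disp23c3 : displays T23 chi3 := by
  have hdisj : ∀ s t : ℕ, s ≠ t → ∀ z : Fin 8, z ∈ K23c3 s → z ∈ K23c3 t → False := by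
    intro s t hst z h1 h2
    unfold K23c3 at h1 h2
    split_ifs at h1 h2 <;> first | omega | (revert z; decide)
  intro s t hst
  rw [Set.disjoint_left]
  intro w h1 h2
  exact hdisj s t hst w (bound23c3 s w h1) (bound23c3 t w h2)


end Aux

theorem fitch_example :
    compatible X5 {chi1, chi2} ∧ compatible X5 {chi1, chi3} ∧ compatible X5 {chi2, chi3} ∧
    ¬ compatible X5 {chi1, chi2, chi3} := by
  refine ⟨⟨T12, ?_⟩, ⟨T13, ?_⟩, ⟨T23, ?_⟩, incompat⟩
  · intro χ hχ
    rcases hχ with rfl | rfl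
    exacts [disp12c1, disp12c2]
  · intro χ hχ
    rcases hχ with rfl | rfl
    exacts [disp13c1, disp13c3]
  · intro χ hχ
    rcases hχ with rfl | rfl
    exacts [disp23c2, disp23c3]

end PP
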